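/- Let P be a finite set of points in ℝ² whose y-coordinates all lie in [0,1], and let G be the unit-disk intersection graph on P (distinct points adjacent iff their Euclidean distance is at most 2). If G is triangle-free (no three pairwise adjacent vertices), then G is bipartite (2-colorable). The same holds for every induced subgraph: any subset S ⊆ P inducing a triangle-free subgraph induces a bipartite subgraph. -/

import Mathlib

/-- The unit-disk intersection graph on points of the plane: distinct points are
adjacent iff their Euclidean distance is at most 2. -/
def unitDiskGraph : SimpleGraph (EuclideanSpace ℝ (Fin 2)) where
  Adj p q := p ≠ q ∧ dist p q ≤ 2
  symm := by
    refine ⟨?_⟩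
    rintro p q ⟨hne, hd⟩
    exact ⟨hne.symm, by rwa [dist_comm]⟩
  loopless := by
    refine ⟨?_⟩
    rintro p ⟨hne, -⟩
    exact hne rfl

section Dilworth

variable {α : Type*}

/-- A finite set with a transitive asymmetric relation has a maximal element. -/
lemma exists_max_rel (r : α → α → Prop) (T : Finset α) (hT : T.Nonempty)
    (htrans : ∀ a ∈ T, ∀ b ∈ T, ∀ c ∈ T, r a b → r b c → r a c)
    (hasymm : ∀ a b, r a b → ¬ r b a) :
    ∃ a ∈ T, ∀ b ∈ T, ¬ r a b := by
  classical
  obtain ⟨a, ha, hmin⟩ := T.exists_min_image (fun x => (T.filter (fun y => r x y)).card) hT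
  refine ⟨a, ha, fun b hb hr => ?_⟩
  have hsub : T.filter (fun y => r b y) ⊂ T.filter (fun y => r a y) := by
    refine ⟨fun c hc => ?_, fun hcon => ?_⟩
    · rw [Finset.mem_filter] at hc ⊢
      exact ⟨hc.1, htrans a ha b hb c hc.1 hr hc.2⟩
    · have hbmem : b ∈ T.filter (fun y => r b y) := hcon (Finset.mem_filter.2 ⟨hb, hr⟩)
      have := (Finset.mem_filter.1 hbmem).2
      exact hasymm b b this this
  have h1 := Finset.card_lt_card hsub
  have h2 := hmin b hb
  omega

/-- Dilworth's theorem for width 2: a finite poset with no 3-element antichain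
is the union of two chains (given as a 2-coloring whose classes are chains). -/
lemma dilworth_two (r : α → α → Prop)
    (hasymm : ∀ a b, r a b → ¬ r b a) :
    ∀ (n : ℕ) (S : Finset α), S.card ≤ n →
    (∀ a ∈ S, ∀ b ∈ S, ∀ c ∈ S, r a b → r b c → r a c) →
    (∀ a ∈ S, ∀ b ∈ S, ∀ c ∈ S, a ≠ b → a ≠ c → b ≠ c →
      ¬ r a b → ¬ r b a → ¬ r a c → ¬ r c a → ¬ r b c → ¬ r c b → False) →
    ∃ C : α → Bool, ∀ a ∈ S, ∀ b ∈ S, a ≠ b → ¬ r a b → ¬ r b a → C a ≠ C b := by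
  classical
  intro n
  induction n with
  | zero =>
    intro S hcard _ _
    refine ⟨fun _ => false, fun a ha => ?_⟩
    rw [Nat.le_zero, Finset.card_eq_zero] at hcard
    simp [hcard] at ha
  | succ n ih =>
    intro S hcard htrans hwidth
    rcases S.eq_empty_or_nonempty with rfl | hne
    · exact ⟨fun _ => false, by simp⟩
    obtain ⟨a, haS, hamax⟩ := exists_max_rel r S hne htrans hasymm
    set S' := S.erase a with hS'def
    have hsub : S' ⊆ S := Finset.erase_subset _ _
    have hcard' : S'.card ≤ n := by
      have h1 : S'.card = S.card - 1 := Finset.card_erase_of_mem haS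
      have h2 : 1 ≤ S.card := Finset.card_pos.2 hne
      omega
    obtain ⟨C, hC⟩ := ih S' hcard'
      (fun x hx y hy z hz => htrans x (hsub hx) y (hsub hy) z (hsub hz))
      (fun x hx y hy z hz => hwidth x (hsub hx) y (hsub hy) z (hsub hz))
    by_cases hanti : ∃ x ∈ S', ∃ y ∈ S', x ≠ y ∧ ¬ r x y ∧ ¬ r y x
    · obtain ⟨x₀, hx₀, y₀, hy₀, hxy, hxy1, hxy2⟩ := hanti
      have hx0y0 : C x₀ ≠ C y₀ := hC x₀ hx₀ y₀ hy₀ hxy hxy1 hxy2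
      -- antichain members of each color
      set A : Bool → Finset α :=
        fun t => S'.filter (fun x => C x = t ∧ ∃ y ∈ S', y ≠ x ∧ ¬ r x y ∧ ¬ r y x) with hAdef
      have hAsub : ∀ t, A t ⊆ S' := fun t => Finset.filter_subset _ _
      have hAne : ∀ t, (A t).Nonempty := by
        intro t
        by_cases h : C x₀ = t
        · exact ⟨x₀, Finset.mem_filter.2 ⟨hx₀, h, y₀, hy₀, hxy.symm, hxy1, hxy2⟩⟩
        · have hy0t : C y₀ = t := by
            revert hx0y0 h
            cases C x₀ <;> cases C y₀ <;> cases t <;> simp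
          exact ⟨y₀, Finset.mem_filter.2 ⟨hy₀, hy0t, x₀, hx₀, hxy,
            fun h' => hxy2 h', fun h' => hxy1 h'⟩⟩
      have hAmax : ∀ t, ∃ b ∈ A t, ∀ x ∈ A t, ¬ r b x := by
        intro t
        exact exists_max_rel r (A t) (hAne t)
          (fun x hx y hy z hz => htrans x (hsub (hAsub t hx)) y (hsub (hAsub t hy))
            z (hsub (hAsub t hz)))
          hasymm
      obtain ⟨a₁, ha₁, hmax₁⟩ := hAmax false
      obtain ⟨a₂, ha₂, hmax₂⟩ := hAmax true
      have ha₁S' : a₁ ∈ S' := hAsub false ha₁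
      have ha₂S' : a₂ ∈ S' := hAsub true ha₂
      have ha₁c : C a₁ = false := (Finset.mem_filter.1 ha₁).2.1
      have ha₂c : C a₂ = true := (Finset.mem_filter.1 ha₂).2.1
      -- the key maximality property: any antichain member of color t is ≤ the top
      have hP : ∀ (t : Bool) (b : α), b ∈ A t → (∀ x ∈ A t, ¬ r b x) →
          ∀ x ∈ S', C x = t → (∃ y ∈ S', y ≠ x ∧ ¬ r x y ∧ ¬ r y x) →
          x = b ∨ r x b := by
        intro t b hb hbmax x hx hxt hxw
        have hxA : x ∈ A t := Finset.mem_filter.2 ⟨hx, hxt, hxw⟩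
        by_cases hxb : x = b
        · exact Or.inl hxb
        by_cases hxrb : r x b
        · exact Or.inr hxrb
        · exfalso
          have hbrx : ¬ r b x := hbmax x hxA
          have := hC b (hAsub t hb) x hx (fun h => hxb h.symm) hbrx hxrb
          rw [hxt, (Finset.mem_filter.1 hb).2.1] at this
          exact this rfl
      -- a₁ and a₂ are incomparable
      have ha₁₂ : ¬ r a₁ a₂ ∧ ¬ r a₂ a₁ := by
        constructor
        · intro hr
          obtain ⟨w, hwS', hwne, hw1, hw2⟩ := (Finset.mem_filter.1 ha₂).2.2
          -- w incomparable to a₂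
          by_cases hwc : C w = true
          · exact hC a₂ ha₂S' w hwS' (Ne.symm hwne) hw1 hw2
              (by rw [ha₂c, hwc])
          · have hwf : C w = false := by revert hwc; cases C w <;> simp
            have := hP false a₁ ha₁ hmax₁ w hwS' hwf ⟨a₂, ha₂S', Ne.symm hwne, hw2, hw1⟩
            rcases this with rfl | hwr
            · exact hw2 hr
            · exact hw2 (htrans w (hsub hwS') a₁ (hsub ha₁S') a₂ (hsub ha₂S') hwr hr)
        · intro hr
          obtain ⟨w, hwS', hwne, hw1, hw2⟩ := (Finset.mem_filter.1 ha₁).2.2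
          by_cases hwc : C w = false
          · exact hC a₁ ha₁S' w hwS' (Ne.symm hwne) hw1 hw2
              (by rw [ha₁c, hwc])
          · have hwt : C w = true := by revert hwc; cases C w <;> simp
            have := hP true a₂ ha₂ hmax₂ w hwS' hwt ⟨a₁, ha₁S', Ne.symm hwne, hw2, hw1⟩
            rcases this with rfl | hwr
            · exact hw2 hr
            · exact hw2 (htrans w (hsub hwS') a₂ (hsub ha₂S') a₁ (hsub ha₁S') hwr hr)
      -- one of a₁, a₂ is below a
      have ha₁ne : a₁ ≠ a := Finset.ne_of_mem_erase ha₁S'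
      have ha₂ne : a₂ ≠ a := Finset.ne_of_mem_erase ha₂S'
      have ha₁₂ne : a₁ ≠ a₂ := by
        intro h; rw [h, ha₂c] at ha₁c; exact Bool.noConfusion ha₁c
      have hba : r a₁ a ∨ r a₂ a := by
        by_contra hcon
        push_neg at hcon
        exact hwidth a haS a₁ (hsub ha₁S') a₂ (hsub ha₂S')
          (Ne.symm ha₁ne) (Ne.symm ha₂ne) ha₁₂ne
          (hamax a₁ (hsub ha₁S')) hcon.1 (hamax a₂ (hsub ha₂S')) hcon.2
          ha₁₂.1 ha₁₂.2
      -- select the color class whose top is below a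
      obtain ⟨t, b, hbA, hbmax, hrba⟩ :
          ∃ (t : Bool) (b : α), b ∈ A t ∧ (∀ x ∈ A t, ¬ r b x) ∧ r b a := by
        rcases hba with h | h
        · exact ⟨false, a₁, ha₁, hmax₁, h⟩
        · exact ⟨true, a₂, ha₂, hmax₂, h⟩
      have hbS' : b ∈ S' := hAsub t hbA
      have hbc : C b = t := (Finset.mem_filter.1 hbA).2.1
      refine ⟨fun z => if z = a ∨ (z ∈ S' ∧ C z = t ∧ (z = b ∨ r z b)) then t else !t,
        ?_⟩
      intro u hu v hv huv hr1 hr2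
      by_cases hcu : u = a ∨ (u ∈ S' ∧ C u = t ∧ (u = b ∨ r u b)) <;>
        by_cases hcv : v = a ∨ (v ∈ S' ∧ C v = t ∧ (v = b ∨ r v b))
      · -- both in the K-class: derive contradiction
        exfalso
        rcases hcu with rfl | ⟨huS', hut, hub⟩
        · rcases hcv with rfl | ⟨hvS', hvt, hvb⟩
          · exact huv rfl
          · rcases hvb with rfl | hvrb
            · exact hr2 hrba
            · exact hr2 (htrans v (hsub hvS') b (hsub hbS') u haS hvrb hrba)
        · rcases hcv with rfl | ⟨hvS', hvt, hvb⟩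
          · rcases hub with rfl | hurb
            · exact hr1 hrba
            · exact hr1 (htrans u (hsub huS') b (hsub hbS') v haS hurb hrba)
          · exact hC u huS' v hvS' huv hr1 hr2 (by rw [hut, hvt])
      · simp only [if_pos hcu, if_neg hcv]
        exact fun h => (Bool.not_ne_self t) h.symm
      · simp only [if_neg hcu, if_pos hcv]
        exact Bool.not_ne_self t
      · -- both outside K
        exfalso
        have huna : u ≠ a := fun h => hcu (Or.inl h)
        have hvna : v ≠ a := fun h => hcv (Or.inl h)
        have huS' : u ∈ S' := Finset.mem_erase.2 ⟨huna, hu⟩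
        have hvS' : v ∈ S' := Finset.mem_erase.2 ⟨hvna, hv⟩
        by_cases hut : C u = t
        · have := hP t b hbA hbmax u huS' hut ⟨v, hvS', Ne.symm huv, hr1, hr2⟩
          exact hcu (Or.inr ⟨huS', hut, this⟩)
        · by_cases hvt : C v = t
          · have := hP t b hbA hbmax v hvS' hvt ⟨u, huS', huv, hr2, hr1⟩
            exact hcv (Or.inr ⟨hvS', hvt, this⟩)
          · have : C u = C v := by
              revert hut hvt; cases C u <;> cases C v <;> cases t <;> simp
            exact hC u huS' v hvS' huv hr1 hr2 this
    · -- no 2-antichain in S' : S' is a chain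
      push_neg at hanti
      refine ⟨fun z => if z = a then true else false, ?_⟩
      intro u hu v hv huv hr1 hr2
      by_cases hua : u = a <;> by_cases hva : v = a
      · exact absurd (hua.trans hva.symm) huv
      · simp [hua, hva]
      · simp [hua, hva]
      · exfalso
        have huS' : u ∈ S' := Finset.mem_erase.2 ⟨hua, hu⟩
        have hvS' : v ∈ S' := Finset.mem_erase.2 ⟨hva, hv⟩
        exact hr2 (hanti u huS' v hvS' huv hr1)

end Dilworth

section Geometry

local notation "E2" => EuclideanSpace ℝ (Fin 2)

lemma dist_formula (p q : E2) :
    dist p q = Real.sqrt ((p 0 - q 0)^2 + (p 1 - q 1)^2) := by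
  rw [EuclideanSpace.dist_eq, Fin.sum_univ_two, Real.dist_eq, Real.dist_eq, sq_abs, sq_abs]

lemma abs_dx_le_dist (p q : E2) : |p 0 - q 0| ≤ dist p q := by
  rw [dist_formula, ← Real.sqrt_sq_eq_abs]
  exact Real.sqrt_le_sqrt (by nlinarith [sq_nonneg (p 1 - q 1)])

lemma dy_bound {p q : E2} (hp : p 1 ∈ Set.Icc (0:ℝ) 1) (hq : q 1 ∈ Set.Icc (0:ℝ) 1) :
    (p 1 - q 1)^2 ≤ 1 := by
  obtain ⟨hp0, hp1⟩ := hp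
  obtain ⟨hq0, hq1⟩ := hq
  nlinarith

lemma dist_le_of_dx {p q : E2} (hdy : (p 1 - q 1)^2 ≤ 1)
    (hdx : (p 0 - q 0)^2 ≤ 3) : dist p q ≤ 2 := by
  rw [dist_formula]
  have h4 : (p 0 - q 0)^2 + (p 1 - q 1)^2 ≤ 4 := by linarith
  calc Real.sqrt ((p 0 - q 0)^2 + (p 1 - q 1)^2) ≤ Real.sqrt 4 := Real.sqrt_le_sqrt h4
    _ = 2 := by rw [show (4:ℝ) = 2^2 by norm_num, Real.sqrt_sq (by norm_num)]

lemma dx_sq_gt {p q : E2} (hdy : (p 1 - q 1)^2 ≤ 1) (h : 2 < dist p q) :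
    3 < (p 0 - q 0)^2 := by
  rw [dist_formula] at h
  have h4 : (2:ℝ)^2 < (p 0 - q 0)^2 + (p 1 - q 1)^2 :=
    (Real.lt_sqrt (by norm_num)).1 h
  nlinarith

/-- the strict order: well to the left (non-adjacent and smaller x). -/
def strip_lt (p q : E2) : Prop := p 0 < q 0 ∧ 2 < dist p q

lemma strip_lt_asymm : ∀ p q : E2, strip_lt p q → ¬ strip_lt q p := by
  intro p q h1 h2
  exact absurd h2.1 (not_lt.2 (le_of_lt h1.1))

lemma strip_lt_trans {p q s : E2}
    (hp : p 1 ∈ Set.Icc (0:ℝ) 1) (hq : q 1 ∈ Set.Icc (0:ℝ) 1) (hs : s 1 ∈ Set.Icc (0:ℝ) 1)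
    (h1 : strip_lt p q) (h2 : strip_lt q s) : strip_lt p s := by
  obtain ⟨hx1, hd1⟩ := h1
  obtain ⟨hx2, hd2⟩ := h2
  have ha : 3 < (p 0 - q 0)^2 := dx_sq_gt (dy_bound hp hq) hd1
  have hb : 3 < (q 0 - s 0)^2 := dx_sq_gt (dy_bound hq hs) hd2
  have hax : 1 < q 0 - p 0 := by nlinarith
  have hbx : 1 < s 0 - q 0 := by nlinarith
  refine ⟨by linarith, ?_⟩
  have habs : |p 0 - s 0| ≤ dist p s := abs_dx_le_dist p s
  have : (2:ℝ) < |p 0 - s 0| := by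
    rw [abs_sub_comm, abs_of_pos (by linarith : (0:ℝ) < s 0 - p 0)]
    linarith
  linarith

lemma adj_of_incomp {p q : E2}
    (hp : p 1 ∈ Set.Icc (0:ℝ) 1) (hq : q 1 ∈ Set.Icc (0:ℝ) 1)
    (_hne : p ≠ q) (h1 : ¬ strip_lt p q) (h2 : ¬ strip_lt q p) :
    dist p q ≤ 2 := by
  by_contra hd
  push_neg at hd
  rcases lt_trichotomy (p 0) (q 0) with h | h | h
  · exact h1 ⟨h, hd⟩
  · have hdx : (p 0 - q 0)^2 ≤ 3 := by rw [h]; norm_num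
    exact absurd (dist_le_of_dx (dy_bound hp hq) hdx) (not_le.2 hd)
  · exact h2 ⟨h, by rwa [dist_comm]⟩

end Geometry

section Main

/-- main auxiliary result: any triangle-free induced subgraph on a subset of the
strip is 2-colorable. -/
lemma strip_two_colorable (P : Finset (EuclideanSpace ℝ (Fin 2)))
    (hy : ∀ p ∈ P, p 1 ∈ Set.Icc (0 : ℝ) 1)
    (S : Set (EuclideanSpace ℝ (Fin 2))) (hSP : S ⊆ ↑P)
    (hcf : (unitDiskGraph.induce S).CliqueFree 3) :
    (unitDiskGraph.induce S).Colorable 2 := by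
  classical
  have hfin : S.Finite := P.finite_toSet.subset hSP
  set T := hfin.toFinset with hTdef
  have hmemT : ∀ x, x ∈ T ↔ x ∈ S := fun x => hfin.mem_toFinset
  have hyT : ∀ p ∈ T, p 1 ∈ Set.Icc (0:ℝ) 1 := by
    intro p hp
    exact hy p (hSP ((hmemT p).1 hp))
  have hadj : ∀ (u v : S), (unitDiskGraph.induce S).Adj u v ↔
      (u : EuclideanSpace ℝ (Fin 2)) ≠ (v : EuclideanSpace ℝ (Fin 2)) ∧
        dist (u : EuclideanSpace ℝ (Fin 2)) (v : EuclideanSpace ℝ (Fin 2)) ≤ 2 := by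
    intro u v
    rfl
  obtain ⟨C, hC⟩ := dilworth_two strip_lt strip_lt_asymm T.card T le_rfl
    (fun a ha b hb c hc h1 h2 =>
      strip_lt_trans (hyT a ha) (hyT b hb) (hyT c hc) h1 h2)
    (by
      intro a ha b hb c hc hab hac hbc h1 h2 h3 h4 h5 h6
      have haS : a ∈ S := (hmemT a).1 ha
      have hbS : b ∈ S := (hmemT b).1 hb
      have hcS : c ∈ S := (hmemT c).1 hc
      have hAB : (unitDiskGraph.induce S).Adj ⟨a, haS⟩ ⟨b, hbS⟩ :=
        (hadj _ _).2 ⟨hab, adj_of_incomp (hyT a ha) (hyT b hb) hab h1 h2⟩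
      have hAC : (unitDiskGraph.induce S).Adj ⟨a, haS⟩ ⟨c, hcS⟩ :=
        (hadj _ _).2 ⟨hac, adj_of_incomp (hyT a ha) (hyT c hc) hac h3 h4⟩
      have hBC : (unitDiskGraph.induce S).Adj ⟨b, hbS⟩ ⟨c, hcS⟩ :=
        (hadj _ _).2 ⟨hbc, adj_of_incomp (hyT b hb) (hyT c hc) hbc h5 h6⟩
      exact hcf {⟨a, haS⟩, ⟨b, hbS⟩, ⟨c, hcS⟩}
        (SimpleGraph.is3Clique_triple_iff.2 ⟨hAB, hAC, hBC⟩))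
  have coloring : (unitDiskGraph.induce S).Coloring Bool := by
    refine SimpleGraph.Coloring.mk (fun v => C v.1) ?_
    intro u v huv
    obtain ⟨hne, hdist⟩ := (hadj u v).1 huv
    have huT : (u : EuclideanSpace ℝ (Fin 2)) ∈ T := (hmemT _).2 u.2
    have hvT : (v : EuclideanSpace ℝ (Fin 2)) ∈ T := (hmemT _).2 v.2
    exact hC u.1 huT v.1 hvT hne
      (fun h => absurd hdist (not_le.2 h.2))
      (fun h => absurd hdist (not_le.2 (by have h2 := h.2; rwa [dist_comm] at h2)))
  have := coloring.colorable
  simpa using this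

end Main

theorem stmt10 (P : Finset (EuclideanSpace ℝ (Fin 2)))
    (hy : ∀ p ∈ P, p 1 ∈ Set.Icc (0 : ℝ) 1) :
    ((unitDiskGraph.induce (↑P : Set (EuclideanSpace ℝ (Fin 2)))).CliqueFree 3 →
      (unitDiskGraph.induce (↑P : Set (EuclideanSpace ℝ (Fin 2)))).Colorable 2) ∧
    ∀ S : Set (EuclideanSpace ℝ (Fin 2)), S ⊆ ↑P →
      (unitDiskGraph.induce S).CliqueFree 3 → (unitDiskGraph.induce S).Colorable 2 := by
  constructor
  · exact strip_two_colorable P hy _ (subset_refl _)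
  · exact fun S hS => strip_two_colorable P hy S hS
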